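/- Let p be a prime, f ≥ 1, and let r_0, …, r_{f-1} be integers with |r_i| ≤ p for all i, satisfying ∑_{i=0}^{f-1} p^{f-1-i} r_i ≡ 0 (mod p^f − 1). Then either (1) (r_0,…,r_{f-1}) = ±(p−1,…,p−1); or (2) the cyclic list r_0,…,r_{f-1} decomposes into disjoint cyclically-consecutive strings each of which is either of the form ±(−1, p−1, …, p−1, p) (possibly with no occurrences of p−1) or of the form (0,…,0); or (3) p = 2 and (r_0,…,r_{f-1}) = ±(2,…,2). -/

import Mathlib

/-- The set of indices covered by a cyclically-consecutive string starting at `i`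
of length `j+1` in `ZMod f`. -/
def coverSet (f : ℕ) [NeZero f] (i : ZMod f) (j : ℕ) : Finset (ZMod f) :=
  (Finset.range (j + 1)).image (fun t : ℕ => (i + (t : ZMod f)))

/-- `(r_i, r_{i+1}, …, r_{i+j}) = ε·(−1, p−1, …, p−1, p)` with `ε ∈ {±1}`,
the middle entries `p−1` occurring `j−1 ≥ 0` times, and the covered indices distinct. -/
def IsPMString (p f : ℕ) [NeZero f] (r : ZMod f → ℤ) (i : ZMod f) (j : ℕ) (ε : ℤ) : Prop :=
  (ε = 1 ∨ ε = -1) ∧ 1 ≤ j ∧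
  r i = -ε ∧
  (∀ t : ℕ, 1 ≤ t → t < j → r (i + (t : ZMod f)) = ε * ((p : ℤ) - 1)) ∧
  r (i + (j : ZMod f)) = ε * (p : ℤ) ∧
  (coverSet f i j).card = j + 1

lemma exists_m (p f : ℕ) (hp : 2 ≤ p) [NeZero f] (r : ZMod f → ℤ)
    (hr : ∀ i, |r i| ≤ (p : ℤ))
    (hcong : ((p : ℤ) ^ f - 1) ∣
      ∑ i : Fin f, (p : ℤ) ^ (f - 1 - i.val) * r ((i.val : ZMod f))) :
    ∃ m : ZMod f → ℤ, (∀ i, r i = p * m i - m (i + 1)) ∧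
      ∀ i, ((p : ℤ) - 1) * |m i| ≤ p := by
  have hf : 1 ≤ f := Nat.one_le_iff_ne_zero.mpr (NeZero.ne f)
  set P : ℤ := (p : ℤ) with hP
  have hP2 : (2 : ℤ) ≤ P := by rw [hP]; exact_mod_cast hp
  have hP0 : (0 : ℤ) < P := by omega
  set g : ℕ → ℤ := fun k => P ^ (f - 1 - k) * r ((k : ZMod f)) with hg
  have hsum : ∑ i : Fin f, (p : ℤ) ^ (f - 1 - i.val) * r ((i.val : ZMod f))
      = ∑ i ∈ Finset.range f, g i := Fin.sum_univ_eq_sum_range g f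
  rw [hsum] at hcong
  obtain ⟨M, hM⟩ := hcong
  set T : ℕ → ℤ := fun k => ∑ i ∈ Finset.Ico k f, g i with hT
  -- bound on partial sums : (P-1) * |T k| ≤ P * (P^(f-k) - 1)
  have hTbound : ∀ k, (P - 1) * |T k| ≤ P * (P ^ (f - k) - 1) := by
    intro k
    have h1 : |T k| ≤ ∑ i ∈ Finset.Ico k f, P ^ (f - 1 - i) * P := by
      refine le_trans (Finset.abs_sum_le_sum_abs _ _) (Finset.sum_le_sum ?_)
      intro i hi
      rw [hg, abs_mul, abs_pow, abs_of_pos hP0]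
      exact mul_le_mul_of_nonneg_left (hr _) (by positivity)
    have h2 : ∑ i ∈ Finset.Ico k f, P ^ (f - 1 - i) * P
        = P * ∑ j ∈ Finset.range (f - k), P ^ j := by
      rw [Finset.mul_sum, Finset.sum_Ico_eq_sum_range]
      rcases le_or_gt f k with h | h
      · rw [Nat.sub_eq_zero_of_le h]; simp
      · rw [← Finset.sum_range_reflect]
        refine Finset.sum_congr rfl fun j hj => ?_
        rw [Finset.mem_range] at hj
        have he : f - 1 - (k + (f - k - 1 - j)) = j := by omega
        rw [he, mul_comm]
    have h3 : (P - 1) * (P * ∑ j ∈ Finset.range (f - k), P ^ j)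
        = P * (P ^ (f - k) - 1) := by
      rw [mul_comm (P-1), mul_assoc]
      rw [geom_sum_mul P (f - k)]
    calc (P - 1) * |T k| ≤ (P - 1) * (P * ∑ j ∈ Finset.range (f-k), P ^ j) := by
          refine mul_le_mul_of_nonneg_left (h1.trans (le_of_eq h2)) (by omega)
      _ = P * (P ^ (f - k) - 1) := h3
  have hPf1 : (0:ℤ) < P ^ f - 1 := by
    have : (1:ℤ) < P ^ f := one_lt_pow₀ (by omega) (by omega)
    omega
  have hT0 : T 0 = (P ^ f - 1) * M := by
    rw [hT]
    dsimp only
    rw [show Finset.Ico 0 f = Finset.range f from by rw [Finset.range_eq_Ico], hM]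
  have hMbound : (P - 1) * |M| ≤ P := by
    have h1 : (P - 1) * |T 0| ≤ P * (P ^ f - 1) := by
      simpa using hTbound 0
    rw [hT0, abs_mul, abs_of_pos hPf1] at h1
    nlinarith [abs_nonneg M, hPf1]
  -- divisibility
  have hdvd : ∀ k ≤ f, (P ^ (f - k)) ∣ (T k + M) := by
    intro k hk
    have hsplit : ∑ i ∈ Finset.range k, g i + T k = ∑ i ∈ Finset.range f, g i :=
      Finset.sum_range_add_sum_Ico g hk
    have : T k + M = M * P ^ f - ∑ i ∈ Finset.range k, g i := by
      have h4 : ∑ i ∈ Finset.range f, g i = (P ^ f - 1) * M := hM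
      rw [← hsplit] at h4
      linarith
    rw [this]
    refine dvd_sub ?_ (Finset.dvd_sum ?_)
    · exact Dvd.dvd.mul_left (pow_dvd_pow P (by omega)) M
    · intro i hi
      rw [Finset.mem_range] at hi
      exact Dvd.dvd.mul_right (pow_dvd_pow P (by omega)) _
  set mz : ℕ → ℤ := fun k => (T k + M) / P ^ (f - k) with hmz
  have hmzspec : ∀ k ≤ f, P ^ (f - k) * mz k = T k + M := fun k hk =>
    Int.mul_ediv_cancel' (hdvd k hk)
  have hpowpos : ∀ k : ℕ, (0:ℤ) < P ^ k := fun k => pow_pos hP0 k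
  have hTf : T f = 0 := by
    rw [hT]; simp
  have hmzf : mz f = M := by
    have := hmzspec f le_rfl
    rw [hTf, Nat.sub_self, pow_zero, one_mul, zero_add] at this
    exact this
  have hmz0 : mz 0 = M := by
    have h := hmzspec 0 (Nat.zero_le f)
    rw [hT0, Nat.sub_zero] at h
    have h2 : P ^ f * mz 0 = P ^ f * M := by rw [h]; ring
    exact mul_left_cancel₀ (ne_of_gt (hpowpos f)) h2
  have hrel : ∀ k : ℕ, k < f → r ((k : ZMod f)) = P * mz k - mz (k + 1) := by
    intro k hk
    have h1 : P ^ (f - k) * mz k = T k + M := hmzspec k hk.le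
    have h2 : P ^ (f - (k+1)) * mz (k+1) = T (k+1) + M := hmzspec (k+1) hk
    have h3 : T k = g k + T (k + 1) := Finset.sum_eq_sum_Ico_succ_bot hk g
    have he : f - k = (f - 1 - k) + 1 := by omega
    have he2 : f - (k+1) = f - 1 - k := by omega
    rw [he2] at h2
    have hps : P ^ (f - k) = P ^ (f-1-k) * P := by rw [he, pow_succ]
    rw [hps] at h1
    have h3' : T k = P ^ (f-1-k) * r ((k : ZMod f)) + T (k+1) := h3
    have h4 : P ^ (f-1-k) * (P * mz k) = P ^ (f-1-k) * (r ((k : ZMod f)) + mz (k+1)) := by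
      nlinarith [h1, h2, h3']
    have h5 := mul_left_cancel₀ (ne_of_gt (hpowpos (f-1-k))) h4
    linarith
  have hbnd : ∀ k : ℕ, k ≤ f → (P - 1) * |mz k| ≤ P := by
    intro k hk
    have h1 : P ^ (f - k) * ((P - 1) * |mz k|) ≤ P ^ (f - k) * P := by
      have habs : P ^ (f - k) * |mz k| = |T k + M| := by
        rw [← hmzspec k hk, abs_mul, abs_of_pos (hpowpos (f-k))]
      have : (P - 1) * |T k + M| ≤ (P - 1) * (|T k| + |M|) :=
        mul_le_mul_of_nonneg_left (abs_add_le _ _) (by omega)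
      calc P ^ (f-k) * ((P - 1) * |mz k|) = (P - 1) * (P ^ (f-k) * |mz k|) := by ring
        _ = (P - 1) * |T k + M| := by rw [habs]
        _ ≤ (P - 1) * (|T k| + |M|) := this
        _ = (P - 1) * |T k| + (P - 1) * |M| := by ring
        _ ≤ P * (P ^ (f - k) - 1) + P := add_le_add (hTbound k) hMbound
        _ = P ^ (f - k) * P := by ring
    exact le_of_mul_le_mul_left h1 (hpowpos (f-k))
  refine ⟨fun i => mz i.val, fun i => ?_, fun i => hbnd i.val (le_of_lt (ZMod.val_lt i))⟩
  show r i = P * mz i.val - mz ((i + 1).val)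
  have hiv : i = ((i.val : ℕ) : ZMod f) := (ZMod.natCast_zmod_val i).symm
  have hrel' := hrel i.val (ZMod.val_lt i)
  rw [← hiv] at hrel'
  have hval : (i + 1).val = (i.val + 1) % f := by
    conv_lhs => rw [hiv]
    rw [show ((i.val : ℕ) : ZMod f) + 1 = ((i.val + 1 : ℕ) : ZMod f) by push_cast; ring]
    exact ZMod.val_natCast f (i.val + 1)
  rcases Nat.lt_or_ge (i.val + 1) f with h | h
  · rw [hval, Nat.mod_eq_of_lt h]
    exact hrel'
  · have hif : i.val + 1 = f := by have := ZMod.val_lt i; omega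
    rw [hval, hif, Nat.mod_self, hmz0, ← hmzf]
    rwa [hif] at hrel'

/-- run length function -/
noncomputable def strJ (f : ℕ) [NeZero f] (m : ZMod f → ℤ) (a : ZMod f) : ℕ :=
  Nat.find (show ∃ j, f ≤ j ∨ m (a + ((j+1 : ℕ) : ZMod f)) ≠ m (a+1) from ⟨f, Or.inl le_rfl⟩)

lemma strJ_spec (f : ℕ) [NeZero f] (m : ZMod f → ℤ) (a : ZMod f) :
    f ≤ strJ f m a ∨ m (a + ((strJ f m a + 1 : ℕ) : ZMod f)) ≠ m (a + 1) :=
  Nat.find_spec (show ∃ j, f ≤ j ∨ m (a + ((j+1 : ℕ) : ZMod f)) ≠ m (a+1) from ⟨f, Or.inl le_rfl⟩)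

lemma strJ_min (f : ℕ) [NeZero f] (m : ZMod f → ℤ) (a : ZMod f) {j : ℕ} (h : j < strJ f m a) :
    ¬ (f ≤ j ∨ m (a + ((j+1 : ℕ) : ZMod f)) ≠ m (a + 1)) :=
  Nat.find_min (show ∃ j, f ≤ j ∨ m (a + ((j+1 : ℕ) : ZMod f)) ≠ m (a+1) from ⟨f, Or.inl le_rfl⟩) h

lemma strJ_le (f : ℕ) [NeZero f] (m : ZMod f → ℤ) (a : ZMod f) {n : ℕ}
    (h : f ≤ n ∨ m (a + ((n+1 : ℕ) : ZMod f)) ≠ m (a + 1)) : strJ f m a ≤ n :=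
  Nat.find_le h

lemma strJ_pos (f : ℕ) [NeZero f] (m : ZMod f → ℤ) (a : ZMod f) : 1 ≤ strJ f m a := by
  rw [Nat.one_le_iff_ne_zero]
  intro h0
  have h := strJ_spec f m a
  rw [h0] at h
  have hf : 1 ≤ f := Nat.one_le_iff_ne_zero.mpr (NeZero.ne f)
  rcases h with h | h
  · omega
  · apply h; norm_num

lemma strJ_lt (f : ℕ) [NeZero f] (m : ZMod f → ℤ) (a : ZMod f)
    (ha : m a ≠ m (a + 1)) : strJ f m a < f := by
  have hf : 1 ≤ f := Nat.one_le_iff_ne_zero.mpr (NeZero.ne f)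
  have h : strJ f m a ≤ f - 1 := by
    refine strJ_le f m a (Or.inr ?_)
    rw [show ((f - 1 + 1 : ℕ) : ZMod f) = ((f : ℕ) : ZMod f) by congr 1; omega,
      ZMod.natCast_self, add_zero]
    exact ha
  omega

lemma strJ_run (f : ℕ) [NeZero f] (m : ZMod f → ℤ) (a : ZMod f) {t : ℕ}
    (h1 : 1 ≤ t) (h2 : t ≤ strJ f m a) : m (a + (t : ZMod f)) = m (a + 1) := by
  have h := strJ_min f m a (j := t - 1) (by omega)
  push_neg at h
  rw [show t - 1 + 1 = t by omega] at h
  exact h.2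

lemma combinatorial(p f : ℕ) (hp : 2 ≤ p) [NeZero f] (r m : ZMod f → ℤ)
    (hr : ∀ i, |r i| ≤ (p : ℤ))
    (hm : ∀ i, r i = (p : ℤ) * m i - m (i + 1))
    (hm1 : ∀ i, m i = 1 ∨ m i = 0 ∨ m i = -1)
    (hne1 : ¬ ∀ i, m i = 1) (hnem1 : ¬ ∀ i, m i = -1) :
    ∃ T : Finset (ZMod f × ℕ × ℤ),
      (∀ s ∈ T, IsPMString p f r s.1 s.2.1 s.2.2) ∧
      (∀ s ∈ T, ∀ s' ∈ T, s ≠ s' →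
        Disjoint (coverSet f s.1 s.2.1) (coverSet f s'.1 s'.2.1)) ∧
      (∀ i : ZMod f, (∀ s ∈ T, i ∉ coverSet f s.1 s.2.1) → r i = 0) := by
  classical
  have hf : 1 ≤ f := Nat.one_le_iff_ne_zero.mpr (NeZero.ne f)
  have hP2 : (2:ℤ) ≤ (p:ℤ) := by exact_mod_cast hp
  have htrans : ∀ i : ZMod f, m i ≠ 0 → m (i+1) = 0 ∨ m (i+1) = m i := by
    intro i hi
    have hb := abs_le.mp (hr i)
    have hri := hm i
    rcases hm1 (i+1) with h2 | h2 | h2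
    · rcases hm1 i with h1 | h1 | h1
      · right; rw [h2, h1]
      · exact absurd h1 hi
      · exfalso; rw [h1, h2] at hri; rcases hb with ⟨hb1, hb2⟩; rw [hri] at hb1; linarith
    · left; exact h2
    · rcases hm1 i with h1 | h1 | h1
      · exfalso; rw [h1, h2] at hri; rcases hb with ⟨hb1, hb2⟩; rw [hri] at hb2; linarith
      · exact absurd h1 hi
      · right; rw [h2, h1]
  have hcov : ∀ (a : ZMod f) (j : ℕ) (x : ZMod f),
      x ∈ coverSet f a j ↔ ∃ t, t ≤ j ∧ a + (t:ℕ) = x := by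
    intro a j x
    unfold coverSet
    simp [Finset.mem_image, Finset.mem_range, Nat.lt_succ_iff]
  have hcard : ∀ (a : ZMod f) (j : ℕ), j < f → (coverSet f a j).card = j + 1 := by
    intro a j hj
    unfold coverSet
    rw [Finset.card_image_of_injOn, Finset.card_range]
    intro t ht u hu htu
    simp only [Finset.coe_range, Set.mem_Iio] at ht hu
    have h1 : ((t:ℕ) : ZMod f) = ((u:ℕ) : ZMod f) := by
      have := htu
      simpa using add_left_cancel this
    have h2 : ((t:ℕ):ZMod f).val = ((u:ℕ):ZMod f).val := by rw [h1]
    rwa [ZMod.val_cast_of_lt (by omega), ZMod.val_cast_of_lt (by omega)] at h2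
  have hcovered : ∀ x : ZMod f, m x ≠ 0 →
      ∃ a, (m a = 0 ∧ m (a+1) ≠ 0) ∧ ∃ t, t ≤ strJ f m a ∧ a + (t:ℕ) = x := by
    intro x hx
    set ε := m x with hε
    have hne : ¬ ∀ i, m i = ε := by
      rcases hm1 x with h|h|h
      · rw [hε, h]; exact hne1
      · exact absurd h hx
      · rw [hε, h]; exact hnem1
    have hex : ∃ s : ℕ, 1 ≤ s ∧ s < f ∧ m (x - (s:ℕ)) ≠ ε := by
      obtain ⟨y, hy⟩ := not_forall.mp hne
      refine ⟨(x - y).val, ?_, ZMod.val_lt _, ?_⟩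
      · rcases Nat.eq_zero_or_pos (x-y).val with h0|h0
        · exfalso
          have hxy : x - y = 0 := by
            rw [← ZMod.natCast_zmod_val (x-y), h0, Nat.cast_zero]
          have : y = x := by
            have := sub_eq_zero.mp hxy
            exact this.symm
          exact hy (by rw [this])
        · exact h0
      · have hxy : x - (((x - y).val : ℕ) : ZMod f) = y := by
          rw [ZMod.natCast_zmod_val]; ring
        rw [hxy]; exact hy
    have hex2 : ∃ s : ℕ, 1 ≤ s ∧ m (x - (s:ℕ)) ≠ ε := by
      obtain ⟨s, h1, _, h3⟩ := hex; exact ⟨s, h1, h3⟩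
    set D := Nat.find hex2 with hD
    obtain ⟨hD1, hDne⟩ : 1 ≤ D ∧ m (x - (D:ℕ)) ≠ ε := Nat.find_spec hex2
    have hDlt : D < f := by
      obtain ⟨s, h1, h2, h3⟩ := hex
      exact lt_of_le_of_lt (Nat.find_le ⟨h1, h3⟩) h2
    have hDrun : ∀ u : ℕ, u < D → m (x - (u:ℕ)) = ε := by
      intro u hu
      rcases Nat.eq_zero_or_pos u with h0|h0
      · rw [h0, Nat.cast_zero, sub_zero]
      · have h := Nat.find_min hex2 hu
        by_contra hc
        exact h ⟨h0, hc⟩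
    set a := x - ((D:ℕ) : ZMod f) with ha
    have hεne : ε ≠ 0 := hx
    have ha1 : m (a + 1) = ε := by
      have h := hDrun (D-1) (by omega)
      have heq : a + 1 = x - (((D-1:ℕ)) : ZMod f) := by
        rw [ha, Nat.cast_sub hD1, Nat.cast_one]; ring
      rw [heq]; exact h
    have ha0 : m a = 0 := by
      by_contra h
      rcases htrans a h with h' | h'
      · exact hεne (by rw [← ha1, h'])
      · exact hDne (by rw [show m (x - ((D:ℕ):ZMod f)) = m a from rfl, ← h', ha1])
    have hJD : D ≤ strJ f m a := by
      by_contra hcon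
      push_neg at hcon
      set J := strJ f m a with hJ
      have hJ1 : 1 ≤ J := strJ_pos f m a
      have hJε : m (a + ((J+1:ℕ) : ZMod f)) = ε := by
        have hu : D - (J+1) < D := by omega
        have h := hDrun (D - (J+1)) hu
        have heq : a + ((J+1:ℕ) : ZMod f) = x - (((D - (J+1) : ℕ)) : ZMod f) := by
          rw [ha, Nat.cast_sub (by omega : J + 1 ≤ D)]
          push_cast
          ring
        rw [heq]; exact h
      rcases strJ_spec f m a with h | h
      · omega
      · rw [hJε, ha1] at h; exact h rfl
    refine ⟨a, ⟨ha0, by rw [ha1]; exact hεne⟩, D, hJD, by rw [ha]; ring⟩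
  have key : ∀ (b b' : ZMod f) (u u' : ℕ), m b = 0 → m (b'+1) ≠ 0 →
      u' ≤ strJ f m b' → u ≤ u' → b + (u:ℕ) = b' + (u':ℕ) → b = b' := by
    intro b b' u u' hb0 hb1' hu' huu' heq
    have hb : b = b' + ((u' - u : ℕ) : ZMod f) := by
      rw [Nat.cast_sub huu']
      linear_combination heq
    rcases Nat.eq_zero_or_pos (u' - u) with h0 | h0
    · rw [h0, Nat.cast_zero, add_zero] at hb; exact hb
    · exfalso
      have hrun := strJ_run f m b' (t := u' - u) h0 (by omega)
      rw [← hb] at hrun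
      rw [hb0] at hrun
      exact hb1' hrun.symm
  have huniq : ∀ (b b' : ZMod f), (m b = 0 ∧ m (b+1) ≠ 0) → (m b' = 0 ∧ m (b'+1) ≠ 0) →
      ∀ x, (∃ t, t ≤ strJ f m b ∧ b + (t:ℕ) = x) → (∃ t', t' ≤ strJ f m b' ∧ b' + (t':ℕ) = x) →
      b = b' := by
    intro b b' hb hb' x ⟨t, ht, hbx⟩ ⟨t', ht', hbx'⟩
    rcases le_total t t' with h | h
    · exact key b b' t t' hb.1 hb'.2 ht' h (by rw [hbx, hbx'])
    · exact (key b' b t' t hb'.1 hb.2 ht h (by rw [hbx, hbx'])).symm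
  refine ⟨(Finset.univ.filter (fun a => m a = 0 ∧ m (a+1) ≠ 0)).image
      (fun a => (a, strJ f m a, m (a+1))), ?_, ?_, ?_⟩
  · -- each element is a string
    intro s hs
    rw [Finset.mem_image] at hs
    obtain ⟨a, haf, rfl⟩ := hs
    rw [Finset.mem_filter] at haf
    obtain ⟨-, ha0, ha1⟩ := haf
    show IsPMString p f r a (strJ f m a) (m (a+1))
    have hJ1 : 1 ≤ strJ f m a := strJ_pos f m a
    have hane : m a ≠ m (a + 1) := by rw [ha0]; exact fun h => ha1 h.symm
    have hJlt : strJ f m a < f := strJ_lt f m a hane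
    have hεpm : m (a+1) = 1 ∨ m (a+1) = -1 := by
      rcases hm1 (a+1) with h|h|h
      · exact Or.inl h
      · exact absurd h ha1
      · exact Or.inr h
    refine ⟨hεpm, hJ1, ?_, ?_, ?_, hcard a (strJ f m a) hJlt⟩
    · rw [hm a, ha0]; ring
    · intro t ht1 ht2
      have h1 : m (a + (t:ℕ)) = m (a+1) := strJ_run f m a ht1 (le_of_lt ht2)
      have h2 : m (a + (t:ℕ) + 1) = m (a+1) := by
        have h := strJ_run f m a (t := t+1) (by omega) (by omega)
        rw [show a + ((t+1:ℕ):ZMod f) = a + (t:ℕ) + 1 from by push_cast; ring] at h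
        exact h
      rw [hm (a + (t:ℕ)), h1, h2]; ring
    · have h1 : m (a + ((strJ f m a : ℕ) : ZMod f)) = m (a+1) := strJ_run f m a hJ1 le_rfl
      have h2 : m (a + ((strJ f m a : ℕ) : ZMod f) + 1) = 0 := by
        have hne := (strJ_spec f m a).resolve_left (by omega)
        have heq : a + ((strJ f m a + 1 : ℕ) : ZMod f)
            = a + ((strJ f m a : ℕ) : ZMod f) + 1 := by push_cast; ring
        rw [heq] at hne
        have hnz : m (a + ((strJ f m a : ℕ) : ZMod f)) ≠ 0 := by
          rw [h1]; exact ha1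
        rcases htrans _ hnz with h|h
        · exact h
        · exfalso; rw [h1] at h; exact hne h
      rw [hm (a + ((strJ f m a : ℕ) : ZMod f)), h1, h2]; ring
  · -- disjointness
    intro s hs s' hs' hne
    rw [Finset.mem_image] at hs hs'
    obtain ⟨a, haf, rfl⟩ := hs
    obtain ⟨a', haf', rfl⟩ := hs'
    rw [Finset.mem_filter] at haf haf'
    have hane : a ≠ a' := fun h => hne (by rw [h])
    rw [Finset.disjoint_left]
    intro x hx hx'
    rw [hcov] at hx hx'
    exact hane (huniq a a' haf.2 haf'.2 x hx hx')
  · -- uncovered indices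
    intro i hi
    have h0 : m i = 0 := by
      by_contra h
      obtain ⟨a, hastart, t, htJ, hat⟩ := hcovered i h
      refine hi (a, strJ f m a, m (a+1)) ?_ ?_
      · rw [Finset.mem_image]
        exact ⟨a, Finset.mem_filter.mpr ⟨Finset.mem_univ a, hastart⟩, rfl⟩
      · rw [hcov]; exact ⟨t, htJ, hat⟩
    have h1 : m (i+1) = 0 := by
      by_contra h
      refine hi (i, strJ f m i, m (i+1)) ?_ ?_
      · rw [Finset.mem_image]
        exact ⟨i, Finset.mem_filter.mpr ⟨Finset.mem_univ i, h0, h⟩, rfl⟩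
      · rw [hcov]
        exact ⟨0, Nat.zero_le _, by rw [Nat.cast_zero, add_zero]⟩
    rw [hm i, h0, h1]; ring

lemma aux_sign (p f : ℕ) (hp : p.Prime) [NeZero f]
    (r : ZMod f → ℤ) (hr : ∀ i, |r i| ≤ (p : ℤ))
    (m : ZMod f → ℤ) (hm : ∀ i, r i = p * m i - m (i + 1))
    (hbnd : ∀ i, ((p : ℤ) - 1) * |m i| ≤ p) :
    ((∀ i, m i = 1 ∨ m i = 0 ∨ m i = -1) ∨ (p = 2 ∧ ((∀ i, m i = 2) ∨ (∀ i, m i = -2)))) := by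
  have hp2 : 2 ≤ p := hp.two_le
  have hP2 : (2:ℤ) ≤ (p:ℤ) := by exact_mod_cast hp2
  rcases Nat.lt_or_ge p 3 with h3 | h3
  · -- p = 2
    have hpe : p = 2 := by omega
    have hPe : (p:ℤ) = 2 := by rw [hpe]; norm_num
    rw [hPe] at hm hr hbnd
    have hb2 : ∀ i, |m i| ≤ 2 := by intro i; have := hbnd i; omega
    have hprop : ∀ ε : ℤ, (ε = 2 ∨ ε = -2) → ∀ i : ZMod f, m i = ε →
        ∀ t : ℕ, m (i + (t:ℕ)) = ε := by
      intro ε hε i hi t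
      induction t with
      | zero => rw [Nat.cast_zero, add_zero]; exact hi
      | succ t ih =>
        have hstep := hm (i + (t:ℕ))
        have habs := abs_le.mp (hr (i + (t:ℕ)))
        have hb := hb2 (i + ((t:ℕ):ZMod f) + 1)
        rw [ih] at hstep
        have heq : i + ((t+1:ℕ) : ZMod f) = i + ((t:ℕ):ZMod f) + 1 := by push_cast; ring
        rw [heq]
        have hb' := abs_le.mp hb
        rcases hε with h | h <;> rw [h] at hstep ⊢ <;> omega
    by_cases h2 : ∃ i, m i = 2 ∨ m i = -2
    · obtain ⟨i, hi⟩ := h2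
      right
      refine ⟨hpe, ?_⟩
      have hall : ∀ ε : ℤ, (ε = 2 ∨ ε = -2) → m i = ε → ∀ x, m x = ε := by
        intro ε hε hi x
        have := hprop ε hε i hi ((x - i).val)
        rwa [ZMod.natCast_zmod_val, add_sub_cancel] at this
      rcases hi with h | h
      · exact Or.inl (hall 2 (Or.inl rfl) h)
      · exact Or.inr (hall (-2) (Or.inr rfl) h)
    · push_neg at h2
      left
      intro i
      have := hb2 i
      have h2i := h2 i
      have := abs_le.mp (hb2 i)
      omega
  · -- p ≥ 3
    left
    intro i
    have := hbnd i
    have h3' : (3:ℤ) ≤ (p:ℤ) := by exact_mod_cast h3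
    have habs := abs_nonneg (m i)
    have : |m i| ≤ 1 := by nlinarith
    have := abs_le.mp this
    omega

theorem stmt0 (p f : ℕ) (hp : p.Prime) [NeZero f]
    (r : ZMod f → ℤ) (hr : ∀ i, |r i| ≤ (p : ℤ))
    (hcong : ((p : ℤ) ^ f - 1) ∣
      ∑ i : Fin f, (p : ℤ) ^ (f - 1 - i.val) * r ((i.val : ZMod f))) :
    ((∀ i, r i = (p : ℤ) - 1) ∨ (∀ i, r i = -((p : ℤ) - 1))) ∨
    (∃ T : Finset (ZMod f × ℕ × ℤ),
      (∀ s ∈ T, IsPMString p f r s.1 s.2.1 s.2.2) ∧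
      (∀ s ∈ T, ∀ s' ∈ T, s ≠ s' →
        Disjoint (coverSet f s.1 s.2.1) (coverSet f s'.1 s'.2.1)) ∧
      (∀ i : ZMod f, (∀ s ∈ T, i ∉ coverSet f s.1 s.2.1) → r i = 0)) ∨
    (p = 2 ∧ ((∀ i, r i = 2) ∨ (∀ i, r i = -2))) := by
  have hp2 : 2 ≤ p := hp.two_le
  obtain ⟨m, hm, hbnd⟩ := exists_m p f hp2 r hr hcong
  rcases aux_sign p f hp r hr m hm hbnd with hm1 | ⟨hpe, hs⟩
  · by_cases h1 : ∀ i, m i = 1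
    · left; left; intro i; rw [hm i, h1 i, h1 (i+1)]; ring
    · by_cases h2 : ∀ i, m i = -1
      · left; right; intro i; rw [hm i, h2 i, h2 (i+1)]; ring
      · right; left; exact combinatorial p f hp2 r m hr hm hm1 h1 h2
  · right; right; refine ⟨hpe, ?_⟩
    have hPe : (p:ℤ) = 2 := by rw [hpe]; norm_num
    rcases hs with h | h
    · left; intro i; rw [hm i, h i, h (i+1), hPe]; norm_num
    · right; intro i; rw [hm i, h i, h (i+1), hPe]; norm_num
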